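/- Let K be a field, let Ω be the similarity class of M(2,K) of matrices with minimal polynomial (x − α)² for some α ∈ K, and let Ψ be an irreducible similarity class of M(2,K) (the characteristic polynomial of its elements is irreducible over K). Then tr(ΩΨ) = { tr(ωψ) : ω ∈ Ω, ψ ∈ Ψ } equals K \ { α · tr(Ψ) }, i.e. every element of K except α times the common trace of elements of Ψ is attained, and α·tr(Ψ) is not attained. -/

import Mathlib

open Matrix Polynomial

section Aux
variable {K : Type*} [Field K]

variable {K : Type*} [Field K]

lemma cp2 (ψ : Matrix (Fin 2) (Fin 2) K) :
    ψ.charpoly = X^2 - C ψ.trace * X + C ψ.det := by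
  rw [Matrix.charpoly, Matrix.det_fin_two, charmatrix_apply_eq,
    charmatrix_apply_eq, charmatrix_apply_ne _ _ _ (by decide),
    charmatrix_apply_ne _ _ _ (by decide), Matrix.trace_fin_two, Matrix.det_fin_two]
  simp only [map_add, map_sub, _root_.map_mul]
  ring

lemma no_root {p : K[X]} (hp : Irreducible p) (hd : p.natDegree = 2) (x : K) :
    ¬ p.IsRoot x := by
  intro h
  obtain ⟨q, hq⟩ := (dvd_iff_isRoot).2 h
  rcases hp.isUnit_or_isUnit hq with h1 | h2
  · exact Polynomial.not_isUnit_X_sub_C x h1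
  · have hq0 : q ≠ 0 := h2.ne_zero
    have : p.natDegree = 1 := by
      rw [hq, Polynomial.natDegree_mul (X_sub_C_ne_zero x) hq0,
        Polynomial.natDegree_X_sub_C, Polynomial.natDegree_eq_zero_of_isUnit h2]
    omega

lemma cpdeg (ψ : Matrix (Fin 2) (Fin 2) K) : ψ.charpoly.natDegree = 2 := by
  simp [Matrix.charpoly_natDegree_eq_dim]

lemma root_of (ψ : Matrix (Fin 2) (Fin 2) K) (x : K) :
    ψ.charpoly.IsRoot x ↔ x^2 - ψ.trace * x + ψ.det = 0 := by
  rw [cp2]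
  simp [Polynomial.IsRoot]

lemma key {N ψ : Matrix (Fin 2) (Fin 2) K} (hN2 : N * N = 0) (hN : N ≠ 0)
    (hirr : Irreducible ψ.charpoly) : (N * ψ).trace ≠ 0 := by
  intro htr
  have e : ∀ i j, N i 0 * N 0 j + N i 1 * N 1 j = 0 := by
    intro i j
    have := congrFun (congrFun hN2 i) j
    simpa [Matrix.mul_apply, Fin.sum_univ_two] using this
  have htr' : N 0 0 * ψ 0 0 + N 0 1 * ψ 1 0 + (N 1 0 * ψ 0 1 + N 1 1 * ψ 1 1) = 0 := by
    rw [← htr, Matrix.trace_fin_two]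
    simp [Matrix.mul_apply, Fin.sum_univ_two]
  have hd : N 1 1 = - N 0 0 := by
    rcases eq_or_ne (N 0 1) 0 with hb0 | hb0
    · rcases eq_or_ne (N 1 0) 0 with hc0 | hc0
      · exfalso
        apply hN
        have ha0 : N 0 0 = 0 :=
          mul_self_eq_zero.1 (by linear_combination e 0 0 - N 0 1 * hc0)
        have hd0 : N 1 1 = 0 :=
          mul_self_eq_zero.1 (by linear_combination e 1 1 - N 1 0 * hb0)
        ext i j
        fin_cases i <;> fin_cases j <;>
          first | exact ha0 | exact hb0 | exact hc0 | exact hd0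
      · have h1 : N 1 0 * (N 0 0 + N 1 1) = 0 := by linear_combination e 1 0
        have := (mul_eq_zero.1 h1).resolve_left hc0
        linear_combination this
    · have h1 : N 0 1 * (N 0 0 + N 1 1) = 0 := by linear_combination e 0 1
      have := (mul_eq_zero.1 h1).resolve_left hb0
      linear_combination this
  rcases eq_or_ne (N 1 0) 0 with hc0 | hc0
  · have ha0 : N 0 0 = 0 :=
      mul_self_eq_zero.1 (by linear_combination e 0 0 - N 0 1 * hc0)
    have hd0 : N 1 1 = 0 := by rw [hd, ha0, neg_zero]
    have hb0 : N 0 1 ≠ 0 := by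
      intro hb0
      apply hN; ext i j
      fin_cases i <;> fin_cases j <;>
        first | exact ha0 | exact hb0 | exact hc0 | exact hd0
    have hr0 : ψ 1 0 = 0 := by
      have h2 : N 0 1 * ψ 1 0 = 0 := by linear_combination htr' - ψ 0 0 * ha0 - ψ 1 1 * hd0 - ψ 0 1 * hc0
      exact (mul_eq_zero.1 h2).resolve_left hb0
    refine no_root hirr (cpdeg ψ) (ψ 0 0) ?_
    rw [root_of, Matrix.trace_fin_two, Matrix.det_fin_two]
    linear_combination (-(ψ 0 1)) * hr0
  · refine no_root hirr (cpdeg ψ) ((ψ 1 0 * N 0 0 + ψ 1 1 * N 1 0) / N 1 0) ?_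
    rw [root_of, Matrix.trace_fin_two, Matrix.det_fin_two]
    have e2 : N 0 0 * ψ 0 0 + N 0 1 * ψ 1 0 + N 1 0 * ψ 0 1 - N 0 0 * ψ 1 1 = 0 := by
      rw [hd] at htr'; linear_combination htr'
    field_simp
    linear_combination (ψ 1 0)^2 * e 0 0 - ψ 1 0 * N 1 0 * e2

variable {K : Type*} [Field K]

lemma minpoly_eq (α : K) {N : Matrix (Fin 2) (Fin 2) K} (hN2 : N * N = 0) (hN : N ≠ 0) :
    minpoly K (α • (1 : Matrix (Fin 2) (Fin 2) K) + N) = (X - C α) ^ 2 := by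
  have halg : algebraMap K (Matrix (Fin 2) (Fin 2) K) α = α • 1 :=
    Algebra.algebraMap_eq_smul_one α
  have haev : (aeval (α • (1 : Matrix (Fin 2) (Fin 2) K) + N)) ((X - C α) ^ 2) = 0 := by
    rw [map_pow, map_sub, aeval_X, aeval_C, halg, add_sub_cancel_left, sq, hN2]
  have hint : IsIntegral K (α • (1 : Matrix (Fin 2) (Fin 2) K) + N) :=
    IsIntegral.of_finite K _
  have hdvd := minpoly.dvd K _ haev
  obtain ⟨i, hi, hassoc⟩ := (dvd_prime_pow (Polynomial.prime_X_sub_C α) 2).1 hdvd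
  have heq : minpoly K (α • (1 : Matrix (Fin 2) (Fin 2) K) + N) = (X - C α) ^ i :=
    Polynomial.eq_of_monic_of_associated (minpoly.monic hint)
      ((monic_X_sub_C α).pow i) hassoc
  interval_cases i
  · exfalso
    have h0 := minpoly.aeval K (α • (1 : Matrix (Fin 2) (Fin 2) K) + N)
    rw [heq, pow_zero, _root_.map_one] at h0
    exact one_ne_zero h0
  · exfalso
    have h0 := minpoly.aeval K (α • (1 : Matrix (Fin 2) (Fin 2) K) + N)
    rw [heq, pow_one, map_sub, aeval_X, aeval_C, halg, add_sub_cancel_left] at h0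
    exact hN h0
  · exact heq
end Aux

/-- Let `K` be a field, `α ∈ K`, let `Ω` be the similarity class of `M(2,K)` consisting
of the matrices with minimal polynomial `(x - α)²`, and let `Ψ` be an irreducible
similarity class of `M(2,K)` with common trace `tΨ`.  Then the set of traces of
products `ωψ` (`ω ∈ Ω`, `ψ ∈ Ψ`) is exactly `K \ {α · tΨ}`. -/
theorem trace_product_unipotent_type_irreducible
    {K : Type*} [Field K] (α : K)
    (Ω Ψ : Set (Matrix (Fin 2) (Fin 2) K))
    (hΩ : Ω = {M : Matrix (Fin 2) (Fin 2) K | minpoly K M = (X - C α) ^ 2})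
    (hΨclass : ∃ A : Matrix (Fin 2) (Fin 2) K,
      Ψ = {B | ∃ g : (Matrix (Fin 2) (Fin 2) K)ˣ,
        (g : Matrix (Fin 2) (Fin 2) K) * A * (↑g⁻¹ : Matrix (Fin 2) (Fin 2) K) = B})
    (hΨirr : ∀ ψ ∈ Ψ, Irreducible (Matrix.charpoly ψ))
    (tΨ : K) (htΨ : ∀ ψ ∈ Ψ, ψ.trace = tΨ) :
    {τ : K | ∃ ω ∈ Ω, ∃ ψ ∈ Ψ, (ω * ψ).trace = τ} = Set.univ \ {α * tΨ} := by
  ext τ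
  simp only [Set.mem_setOf_eq, Set.mem_diff, Set.mem_univ, Set.mem_singleton_iff, true_and]
  constructor
  · rintro ⟨ω, hω, ψ, hψ, rfl⟩
    rw [hΩ, Set.mem_setOf_eq] at hω
    set N := ω - α • (1 : Matrix (Fin 2) (Fin 2) K) with hNdef
    have halg : algebraMap K (Matrix (Fin 2) (Fin 2) K) α = α • 1 :=
      Algebra.algebraMap_eq_smul_one α
    have hN2 : N * N = 0 := by
      have h0 := minpoly.aeval K ω
      rw [hω, map_pow, map_sub, aeval_X, aeval_C, halg, sq] at h0
      exact h0
    have hNne : N ≠ 0 := by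
      intro h
      have hωeq : ω = α • 1 := by rwa [hNdef, sub_eq_zero] at h
      have haev1 : (aeval ω) (X - C α) = 0 := by
        rw [map_sub, aeval_X, aeval_C, halg, hωeq, sub_self]
      have hdvd := minpoly.dvd K ω haev1
      rw [hω] at hdvd
      have := Polynomial.natDegree_le_of_dvd hdvd (X_sub_C_ne_zero α)
      simp [Polynomial.natDegree_pow, Polynomial.natDegree_X_sub_C] at this
    have hωadd : ω = α • 1 + N := by rw [hNdef]; abel
    have htrω : (ω * ψ).trace = α * tΨ + (N * ψ).trace := by
      rw [hωadd, add_mul, smul_mul_assoc, one_mul, Matrix.trace_add, Matrix.trace_smul,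
        htΨ ψ hψ, smul_eq_mul]
    rw [htrω]
    intro hcon
    exact key hN2 hNne (hΨirr ψ hψ) (by linear_combination hcon)
  · intro hτ
    obtain ⟨A, hA⟩ := hΨclass
    have hAΨ : A ∈ Ψ := by rw [hA]; exact ⟨1, by simp⟩
    have hA10 : A 1 0 ≠ 0 := by
      intro h
      refine no_root (hΨirr A hAΨ) (cpdeg A) (A 0 0) ?_
      rw [root_of, Matrix.trace_fin_two, Matrix.det_fin_two]
      linear_combination (-(A 0 1)) * h
    set s : K := (τ - α * tΨ) / A 1 0 with hsdef
    have hs : s ≠ 0 := div_ne_zero (sub_ne_zero.2 hτ) hA10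
    set N : Matrix (Fin 2) (Fin 2) K := !![0, s; 0, 0] with hNdef
    have hN2 : N * N = 0 := by
      ext i j
      fin_cases i <;> fin_cases j <;>
        simp [hNdef, Matrix.mul_apply, Fin.sum_univ_two]
    have hNne : N ≠ 0 := by
      intro h
      apply hs
      have := congrFun (congrFun h 0) 1
      simpa [hNdef] using this
    refine ⟨α • 1 + N, ?_, A, hAΨ, ?_⟩
    · rw [hΩ]; exact minpoly_eq α hN2 hNne
    · have htrN : (N * A).trace = s * A 1 0 := by
        rw [Matrix.trace_fin_two]
        simp [hNdef, Matrix.mul_apply, Fin.sum_univ_two]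
      rw [add_mul, smul_mul_assoc, one_mul, Matrix.trace_add, Matrix.trace_smul,
        htΨ A hAΨ, smul_eq_mul, htrN, hsdef, div_mul_cancel₀ _ hA10]
      ring
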